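/- (Modified Lemma 1, interior point) Let W_A and W_1, …, W_l be subspaces of V, and let r ≥ 1. Partition {1,…,l} into disjoint groups R_1, …, R_t each of size r (t ≥ 1) together with a remainder set R' of size strictly less than r. Assume: (modified L2) for every S ⊆ {1,…,l} with |S| ≤ 2r−1, I(W_A ; W_S) = 0; (modified L3) for all pairwise disjoint subsets B_1, B_2, B_3 ⊆ {1,…,l} with |B_3| = r, I(W_A ; W_{B_1} | W_{B_2} + W_{B_3}) = I(W_A ; W_{B_1} | W_{B_3}). Then I(W_A ; W_{{1,…,l}}) = Σ_{j=2}^t I(W_A ; W_{R_j} | W_{R_1}). -/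
import Mathlib


/-- Mutual information of two subspaces: `I(A;B) = dim A + dim B − dim(A+B)`. -/
noncomputable def mi (F : Type*) {V : Type*} [Field F] [AddCommGroup V] [Module F V]
    (A B : Submodule F V) : ℤ :=
  (Module.finrank F A : ℤ) + Module.finrank F B - Module.finrank F (A ⊔ B : Submodule F V)

/-- Conditional mutual information of subspaces:
`I(A;B|C) = dim(A+C) + dim(B+C) − dim(A+B+C) − dim C`. -/
noncomputable def cmi (F : Type*) {V : Type*} [Field F] [AddCommGroup V] [Module F V]
    (A B C : Submodule F V) : ℤ :=
  (Module.finrank F (A ⊔ C : Submodule F V) : ℤ) + Module.finrank F (B ⊔ C : Submodule F V)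
    - Module.finrank F (A ⊔ B ⊔ C : Submodule F V) - Module.finrank F C

lemma mi_chain (F : Type*) {V : Type*} [Field F] [AddCommGroup V] [Module F V]
    (A X Y : Submodule F V) : mi F A (X ⊔ Y) = mi F A Y + cmi F A X Y := by
  have h : A ⊔ (X ⊔ Y) = A ⊔ X ⊔ Y := (sup_assoc A X Y).symm
  unfold mi cmi
  rw [h]
  ring

/-- Modified Lemma 1, interior point: under modified (L2) and
modified (L3), `I(W_A ; W_{{1,…,l}}) = Σ_{j=2}^t I(W_A ; W_{R_j} | W_{R_1})`. -/
theorem modified_lemma1_groupwise_decomposition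
    (F V : Type*) [Field F] [AddCommGroup V] [Module F V] [FiniteDimensional F V]
    (l t r : ℕ) (hr : 1 ≤ r) (ht : 0 < t)
    (WA : Submodule F V) (W : Fin l → Submodule F V)
    (R : Fin t → Finset (Fin l)) (R' : Finset (Fin l))
    (hcard : ∀ j : Fin t, (R j).card = r) (hcard' : R'.card < r)
    (hdisj : ∀ j j' : Fin t, j ≠ j' → Disjoint (R j) (R j'))
    (hdisj' : ∀ j : Fin t, Disjoint (R j) R')
    (hcover : Finset.univ.biUnion R ∪ R' = (Finset.univ : Finset (Fin l)))
    (hL2 : ∀ S : Finset (Fin l), S.card ≤ 2 * r - 1 → mi F WA (S.sup W) = 0)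
    (hL3 : ∀ B₁ B₂ B₃ : Finset (Fin l), Disjoint B₁ B₂ → Disjoint B₁ B₃ →
      Disjoint B₂ B₃ → B₃.card = r →
      cmi F WA (B₁.sup W) (B₂.sup W ⊔ B₃.sup W) = cmi F WA (B₁.sup W) (B₃.sup W)) :
    mi F WA ((Finset.univ : Finset (Fin l)).sup W)
      = ∑ j ∈ Finset.univ.erase (⟨0, ht⟩ : Fin t),
          cmi F WA ((R j).sup W) ((R ⟨0, ht⟩).sup W) := by
  classical
  set z : Fin t := ⟨0, ht⟩ with hz
  have key : ∀ J : Finset (Fin t), z ∉ J →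
      mi F WA (((insert z J).biUnion R ∪ R').sup W)
        = ∑ j ∈ J, cmi F WA ((R j).sup W) ((R z).sup W) := by
    intro J
    induction J using Finset.induction_on with
    | empty =>
      intro _
      rw [Finset.sum_empty]
      apply hL2
      simp only [Finset.biUnion_insert, Finset.biUnion_empty, Finset.union_empty]
      calc (R z ∪ R').card ≤ (R z).card + R'.card := Finset.card_union_le _ _
        _ ≤ 2 * r - 1 := by rw [hcard z]; omega
    | @insert a J haJ ih =>
      intro hzins
      have haz : a ≠ z := by rintro rfl; exact hzins (Finset.mem_insert_self _ _)
      have hzJ : z ∉ J := fun h => hzins (Finset.mem_insert_of_mem h)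
      have hswap : insert z (insert a J) = insert a (insert z J) :=
        Finset.insert_comm z a J
      rw [hswap, Finset.biUnion_insert, Finset.union_assoc, Finset.sup_union,
        mi_chain, ih hzJ, Finset.sum_insert haJ]
      have hdra : Disjoint (R a) (J.biUnion R ∪ R') := by
        rw [Finset.disjoint_union_right]
        refine ⟨Finset.disjoint_biUnion_right _ _ _ |>.mpr fun j hj => ?_, hdisj' a⟩
        exact hdisj a j (fun h => haJ (h ▸ hj))
      have hdB2 : Disjoint (J.biUnion R ∪ R') (R z) := by
        rw [Finset.disjoint_union_left]
        refine ⟨Finset.disjoint_biUnion_left _ _ _ |>.mpr fun j hj => ?_,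
          (hdisj' z).symm⟩
        exact hdisj j z (fun h => hzJ (h ▸ hj))
      have hsupeq : ((insert z J).biUnion R ∪ R').sup W
          = (J.biUnion R ∪ R').sup W ⊔ (R z).sup W := by
        rw [Finset.biUnion_insert]
        rw [show R z ∪ J.biUnion R ∪ R' = (J.biUnion R ∪ R') ∪ R z by
          rw [Finset.union_comm (R z), Finset.union_assoc, Finset.union_assoc,
            Finset.union_comm R' (R z)]]
        rw [Finset.sup_union]
      rw [hsupeq, hL3 (R a) (J.biUnion R ∪ R') (R z) hdra (hdisj a z haz) hdB2 (hcard z)]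
      ring
  have hmain := key (Finset.univ.erase z) (Finset.notMem_erase z _)
  rwa [Finset.insert_erase (Finset.mem_univ z), hcover] at hmain
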